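/- Let A be a linear map from n×n real matrices into ℝ^m and let r ≤ n. Suppose that for every pair of orthogonal projection matrices P and Q onto r-dimensional subspaces of ℝ^n and every Y in the null space of A, one has ‖(I−P) Y (I−Q)‖_* ≥ ‖P Y Q‖_*. Then for every Y in the null space of A and every decomposition Y = Y₁ + Y₂ where rank(Y₁) = r and rank(Y₂) > r, it holds that ‖Y₁‖_* ≤ ‖Y₂‖_*. -/

import Mathlib

open Matrix

/-- The nuclear norm of a real matrix: the sum of its singular values,
i.e. the sum of the square roots of the eigenvalues of `Xᵀ * X`. -/
noncomputable def nuclearNorm {m n : Type*} [Fintype m] [Fintype n] [DecidableEq n]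
    (X : Matrix m n ℝ) : ℝ :=
  ∑ i, Real.sqrt ((Matrix.isHermitian_conjTranspose_mul_self X).eigenvalues i)

namespace NN6
variable {n : ℕ}
abbrev Mat (n : ℕ) := Matrix (Fin n) (Fin n) ℝ
def IsContr (W : Mat n) : Prop := ∀ x : Fin n → ℝ, (W *ᵥ x) ⬝ᵥ (W *ᵥ x) ≤ x ⬝ᵥ x
noncomputable def specV (X : Mat n) : Mat n :=
  ((isHermitian_conjTranspose_mul_self X).eigenvectorUnitary : Mat n)
noncomputable def specL (X : Mat n) : Fin n → ℝ := (isHermitian_conjTranspose_mul_self X).eigenvalues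
lemma specV_mul_t (X : Mat n) : specV X * (specV X)ᵀ = 1 := by
  have h := (Matrix.mem_unitaryGroup_iff).mp (isHermitian_conjTranspose_mul_self X).eigenvectorUnitary.2
  simpa [specV, star_eq_conjTranspose, conjTranspose_eq_transpose_of_trivial] using h
lemma specV_t_mul (X : Mat n) : (specV X)ᵀ * specV X = 1 := by
  have h := (Matrix.mem_unitaryGroup_iff').mp (isHermitian_conjTranspose_mul_self X).eigenvectorUnitary.2
  simpa [specV, star_eq_conjTranspose, conjTranspose_eq_transpose_of_trivial] using h
lemma spec_decomp (X : Mat n) : Xᵀ * X = specV X * diagonal (specL X) * (specV X)ᵀ := by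
  have h := (isHermitian_conjTranspose_mul_self X).spectral_theorem
  rw [show Xᵀ = Xᴴ from (conjTranspose_eq_transpose_of_trivial X).symm]
  simpa [specV, specL, star_eq_conjTranspose, conjTranspose_eq_transpose_of_trivial,
    Function.comp] using h
lemma specL_nonneg (X : Mat n) (i : Fin n) : 0 ≤ specL X i :=
  eigenvalues_conjTranspose_mul_self_nonneg X i
lemma nn_eq_sum (X : Mat n) : nuclearNorm X = ∑ i, Real.sqrt (specL X i) := rfl
lemma dot_self_nonneg (v : Fin n → ℝ) : 0 ≤ v ⬝ᵥ v :=
  Finset.sum_nonneg fun _ _ => mul_self_nonneg _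
lemma dot_mulVec_mulVec (M N : Mat n) (a b : Fin n → ℝ) :
    (M *ᵥ a) ⬝ᵥ (N *ᵥ b) = a ⬝ᵥ ((Mᵀ * N) *ᵥ b) := by
  conv_rhs => rw [← mulVec_mulVec, dotProduct_mulVec, vecMul_transpose]
lemma quad_diag (V : Mat n) (e : Fin n → ℝ) (x : Fin n → ℝ) :
    x ⬝ᵥ ((V * diagonal e * Vᵀ) *ᵥ x) = ∑ i, e i * ((Vᵀ *ᵥ x) i) ^ 2 := by
  rw [← mulVec_mulVec, ← mulVec_mulVec, dotProduct_mulVec, ← mulVec_transpose]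
  simp only [dotProduct, mulVec_diagonal]
  exact Finset.sum_congr rfl fun i _ => by ring
lemma dot_self_of_orth {V : Mat n} (hV : V * Vᵀ = 1) (x : Fin n → ℝ) :
    x ⬝ᵥ x = ∑ i, ((Vᵀ *ᵥ x) i) ^ 2 := by
  have := dot_mulVec_mulVec Vᵀ Vᵀ x x
  rw [transpose_transpose, hV] at this
  simp only [one_mulVec] at this
  rw [← this]
  simp only [dotProduct]
  exact Finset.sum_congr rfl fun i _ => by ring
lemma cs_dot (a b : Fin n → ℝ) : a ⬝ᵥ b ≤ Real.sqrt (a ⬝ᵥ a) * Real.sqrt (b ⬝ᵥ b) := by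
  have h := Finset.sum_mul_sq_le_sq_mul_sq Finset.univ a b
  have h2 : (a ⬝ᵥ b) ^ 2 ≤ (a ⬝ᵥ a) * (b ⬝ᵥ b) := by
    simpa [dotProduct, pow_two] using h
  calc a ⬝ᵥ b ≤ |a ⬝ᵥ b| := le_abs_self _
    _ = Real.sqrt ((a ⬝ᵥ b) ^ 2) := (Real.sqrt_sq_eq_abs _).symm
    _ ≤ Real.sqrt ((a ⬝ᵥ a) * (b ⬝ᵥ b)) := Real.sqrt_le_sqrt h2
    _ = _ := Real.sqrt_mul (dot_self_nonneg a) _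
lemma trace_t_mul (A B : Mat n) :
    trace (Aᵀ * B) = ∑ j, (fun k => A k j) ⬝ᵥ (fun k => B k j) := by
  simp [trace, diag, mul_apply, dotProduct]
lemma col_mul (W V : Mat n) (j : Fin n) :
    (fun k => (W * V) k j) = W *ᵥ (fun l => V l j) := by
  funext k; simp [mul_apply, mulVec, dotProduct]

lemma trace_le_nn {W : Mat n} (hW : IsContr W) (X : Mat n) :
    trace (Wᵀ * X) ≤ nuclearNorm X := by
  set V := specV X with hVdef
  have hVt : Vᵀ * V = 1 := specV_t_mul X
  have hVVt : V * Vᵀ = 1 := specV_mul_t X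
  have h1 : (W * V)ᵀ * (X * V) = Vᵀ * (Wᵀ * X * V) := by
    simp [transpose_mul, Matrix.mul_assoc]
  have h2 : trace ((W * V)ᵀ * (X * V)) = trace (Wᵀ * X) := by
    rw [h1, Matrix.trace_mul_comm]
    simp only [Matrix.mul_assoc]
    rw [hVVt, Matrix.mul_one]
  rw [← h2, trace_t_mul, nn_eq_sum]
  apply Finset.sum_le_sum
  intro j _
  rw [col_mul, col_mul]
  set v : Fin n → ℝ := fun l => V l j with hv
  have hv1 : v ⬝ᵥ v = 1 := by
    have h := congrFun (congrFun hVt j) j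
    simpa [mul_apply, dotProduct, one_apply, hv] using h
  have hVtv : (Vᵀ *ᵥ v) = fun i => (1 : Mat n) i j := by
    funext i
    have h := congrFun (congrFun hVt i) j
    simpa [mulVec, mul_apply, dotProduct, hv] using h
  have hXv : (X *ᵥ v) ⬝ᵥ (X *ᵥ v) = specL X j := by
    rw [dot_mulVec_mulVec, spec_decomp X, ← hVdef, quad_diag, hVtv]
    rw [Finset.sum_eq_single j]
    · simp
    · intro i _ hij; simp [one_apply, hij]
    · simp
  have hWv : (W *ᵥ v) ⬝ᵥ (W *ᵥ v) ≤ 1 := hv1 ▸ hW v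
  calc (W *ᵥ v) ⬝ᵥ (X *ᵥ v)
      ≤ Real.sqrt ((W *ᵥ v) ⬝ᵥ (W *ᵥ v)) * Real.sqrt ((X *ᵥ v) ⬝ᵥ (X *ᵥ v)) := cs_dot _ _
    _ ≤ 1 * Real.sqrt (specL X j) := by
        rw [hXv]
        apply mul_le_mul_of_nonneg_right _ (Real.sqrt_nonneg _)
        rw [show (1:ℝ) = Real.sqrt 1 by simp]
        exact Real.sqrt_le_sqrt hWv
    _ = Real.sqrt (specL X j) := one_mul _

lemma exists_opt (X : Mat n) : ∃ W : Mat n, IsContr W ∧ trace (Wᵀ * X) = nuclearNorm X := by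
  set V := specV X with hVdef
  set lam := specL X with hlam
  have hVt : Vᵀ * V = 1 := specV_t_mul X
  have hVVt : V * Vᵀ = 1 := specV_mul_t X
  have hdec : Xᵀ * X = V * diagonal lam * Vᵀ := spec_decomp X
  have hVt' : ∀ Z : Mat n, Vᵀ * (V * Z) = Z := fun Z => by
    rw [← Matrix.mul_assoc, hVt, Matrix.one_mul]
  set g : Fin n → ℝ := fun i => if lam i = 0 then 0 else (Real.sqrt (lam i))⁻¹ with hg
  have sandwich : ∀ a b : Fin n → ℝ, (V * diagonal a * Vᵀ) * (V * diagonal b * Vᵀ)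
      = V * diagonal (fun i => a i * b i) * Vᵀ := by
    intro a b
    simp only [Matrix.mul_assoc, hVt']
    simp only [← Matrix.mul_assoc]
    rw [Matrix.mul_assoc V (diagonal a) (diagonal b), diagonal_mul_diagonal]
  set M : Mat n := V * diagonal g * Vᵀ with hM
  have hMt : Mᵀ = M := by
    rw [hM, transpose_mul, transpose_mul, transpose_transpose, diagonal_transpose,
      Matrix.mul_assoc]
  refine ⟨X * M, ?_, ?_⟩
  · intro x
    have hWtW : (X * M)ᵀ * (X * M)
        = V * diagonal (fun i => (fun j => g j * lam j) i * g i) * Vᵀ := by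
      have e1 : (X * M)ᵀ * (X * M) = M * (Xᵀ * X) * M := by
        rw [transpose_mul, hMt]
        simp only [Matrix.mul_assoc]
      rw [e1, hdec, hM, sandwich, sandwich]
    rw [dot_mulVec_mulVec, hWtW, quad_diag, dot_self_of_orth hVVt]
    apply Finset.sum_le_sum
    intro i _
    have he : g i * lam i * g i ≤ 1 := by
      by_cases h : lam i = 0
      · simp [hg, h]
      · have hpos : 0 < lam i := lt_of_le_of_ne (specL_nonneg X i) (Ne.symm h)
        have hs : Real.sqrt (lam i) ≠ 0 := by positivity
        simp only [hg, if_neg h]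
        rw [show lam i = Real.sqrt (lam i) * Real.sqrt (lam i) from
          (Real.mul_self_sqrt hpos.le).symm]
        field_simp
        rw [Real.sqrt_sq (Real.sqrt_nonneg _)]
    have he0 : 0 ≤ g i * lam i * g i := by
      by_cases h : lam i = 0
      · simp [hg, h]
      · have hpos : 0 < lam i := lt_of_le_of_ne (specL_nonneg X i) (Ne.symm h)
        have : 0 < Real.sqrt (lam i) := Real.sqrt_pos.mpr hpos
        simp only [hg, if_neg h]
        positivity
    show g i * lam i * g i * ((Vᵀ *ᵥ x) i) ^ 2 ≤ ((Vᵀ *ᵥ x) i) ^ 2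
    nlinarith [sq_nonneg (((Vᵀ) *ᵥ x) i)]
  · have hWtX : (X * M)ᵀ * X = V * diagonal (fun i => g i * lam i) * Vᵀ := by
      have e1 : (X * M)ᵀ * X = M * (Xᵀ * X) := by
        rw [transpose_mul, hMt]
        simp only [Matrix.mul_assoc]
      rw [e1, hdec, hM]
      exact sandwich g lam
    rw [hWtX, nn_eq_sum, ← hlam]
    rw [Matrix.trace_mul_comm, ← Matrix.mul_assoc, hVt, Matrix.one_mul, trace_diagonal]
    apply Finset.sum_congr rfl
    intro i _
    by_cases h : lam i = 0
    · simp [hg, h]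
    · have hpos : 0 < lam i := lt_of_le_of_ne (specL_nonneg X i) (Ne.symm h)
      have hs : Real.sqrt (lam i) ≠ 0 := by positivity
      simp only [hg, if_neg h]
      rw [show lam i = Real.sqrt (lam i) * Real.sqrt (lam i) from
        (Real.mul_self_sqrt hpos.le).symm]
      field_simp
      rw [Real.sqrt_sq (Real.sqrt_nonneg _)]

noncomputable def nnAux (A : Mat n) : ℝ :=
  if h : A.IsHermitian then ∑ i, Real.sqrt (h.eigenvalues i) else 0

lemma nn_eq_aux (X : Mat n) : nuclearNorm X = nnAux (Xᴴ * X) := by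
  rw [nnAux, dif_pos (isHermitian_conjTranspose_mul_self X)]
  rfl

lemma nn_congr {X Z : Mat n} (h : Xᵀ * X = Zᵀ * Z) : nuclearNorm X = nuclearNorm Z := by
  rw [nn_eq_aux, nn_eq_aux]
  exact congrArg nnAux (by simpa [conjTranspose_eq_transpose_of_trivial] using h)

lemma nn_neg (X : Mat n) : nuclearNorm (-X) = nuclearNorm X :=
  nn_congr (by simp)

lemma nn_add_le (B C : Mat n) : nuclearNorm (B + C) ≤ nuclearNorm B + nuclearNorm C := by
  obtain ⟨W, hW, hopt⟩ := exists_opt (B + C)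
  rw [← hopt, Matrix.mul_add, trace_add]
  exact add_le_add (trace_le_nn hW B) (trace_le_nn hW C)

lemma one_sub_t {P : Mat n} (hPt : Pᵀ = P) : (1 - P)ᵀ = 1 - P := by
  rw [transpose_sub, transpose_one, hPt]

lemma one_sub_idem {P : Mat n} (hPi : P * P = P) : (1 - P) * (1 - P) = 1 - P := by
  rw [Matrix.sub_mul, Matrix.one_mul, Matrix.mul_sub, Matrix.mul_one, hPi, sub_self, sub_zero]

lemma proj_norm_split {P : Mat n} (hPt : Pᵀ = P) (hPi : P * P = P) (x : Fin n → ℝ) :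
    (P *ᵥ x) ⬝ᵥ (P *ᵥ x) + ((1 - P) *ᵥ x) ⬝ᵥ ((1 - P) *ᵥ x) = x ⬝ᵥ x := by
  rw [dot_mulVec_mulVec, dot_mulVec_mulVec, hPt, hPi, one_sub_t hPt, one_sub_idem hPi,
    ← dotProduct_add, ← Matrix.add_mulVec, add_sub_cancel, Matrix.one_mulVec]

lemma proj_contract {P : Mat n} (hPt : Pᵀ = P) (hPi : P * P = P) (x : Fin n → ℝ) :
    (P *ᵥ x) ⬝ᵥ (P *ᵥ x) ≤ x ⬝ᵥ x := by
  have h := proj_norm_split hPt hPi x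
  have h2 := dot_self_nonneg ((1 - P) *ᵥ x)
  linarith

lemma proj_orth {P : Mat n} (hPt : Pᵀ = P) (hPi : P * P = P) (a b : Fin n → ℝ) :
    (P *ᵥ a) ⬝ᵥ ((1 - P) *ᵥ b) = 0 := by
  rw [dot_mulVec_mulVec, hPt]
  have h : P * (1 - P) = 0 := by rw [Matrix.mul_sub, Matrix.mul_one, hPi, sub_self]
  rw [h, Matrix.zero_mulVec, dotProduct_zero]

lemma pinch {P Q : Mat n} (hPt : Pᵀ = P) (hPi : P * P = P)
    (hQt : Qᵀ = Q) (hQi : Q * Q = Q) (X : Mat n) :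
    nuclearNorm (P * X * Q) + nuclearNorm ((1 - P) * X * (1 - Q)) ≤ nuclearNorm X := by
  obtain ⟨W₁, hW₁, h1⟩ := exists_opt (P * X * Q)
  obtain ⟨W₂, hW₂, h2⟩ := exists_opt ((1 - P) * X * (1 - Q))
  set W : Mat n := P * W₁ * Q + (1 - P) * W₂ * (1 - Q) with hWdef
  have hcontr : IsContr W := by
    intro x
    have hWx : W *ᵥ x = P *ᵥ (W₁ *ᵥ (Q *ᵥ x)) + (1 - P) *ᵥ (W₂ *ᵥ ((1 - Q) *ᵥ x)) := by
      rw [hWdef, Matrix.add_mulVec]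
      simp only [mulVec_mulVec, ← Matrix.mul_assoc]
    set a := W₁ *ᵥ (Q *ᵥ x) with ha
    set b := W₂ *ᵥ ((1 - Q) *ᵥ x) with hb
    rw [hWx]
    have expand : (P *ᵥ a + (1 - P) *ᵥ b) ⬝ᵥ (P *ᵥ a + (1 - P) *ᵥ b)
        = (P *ᵥ a) ⬝ᵥ (P *ᵥ a) + ((1 - P) *ᵥ b) ⬝ᵥ ((1 - P) *ᵥ b) := by
      rw [add_dotProduct, dotProduct_add, dotProduct_add, proj_orth hPt hPi a b]
      have h0 : ((1 - P) *ᵥ b) ⬝ᵥ (P *ᵥ a) = 0 := by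
        rw [dotProduct_comm]; exact proj_orth hPt hPi a b
      rw [h0]; ring
    rw [expand]
    have c1 : (P *ᵥ a) ⬝ᵥ (P *ᵥ a) ≤ (Q *ᵥ x) ⬝ᵥ (Q *ᵥ x) :=
      le_trans (proj_contract hPt hPi a) (hW₁ _)
    have c2 : ((1 - P) *ᵥ b) ⬝ᵥ ((1 - P) *ᵥ b) ≤ ((1 - Q) *ᵥ x) ⬝ᵥ ((1 - Q) *ᵥ x) :=
      le_trans (proj_contract (one_sub_t hPt) (one_sub_idem hPi) b) (hW₂ _)
    have hsplit := proj_norm_split hQt hQi x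
    linarith
  have htr : trace (Wᵀ * X)
      = nuclearNorm (P * X * Q) + nuclearNorm ((1 - P) * X * (1 - Q)) := by
    have hWt : Wᵀ = Q * (W₁ᵀ * P) + (1 - Q) * (W₂ᵀ * (1 - P)) := by
      rw [hWdef, transpose_add, transpose_mul, transpose_mul, transpose_mul, transpose_mul,
        hPt, hQt, one_sub_t hPt, one_sub_t hQt]
    have e1 : trace (Q * (W₁ᵀ * P) * X) = trace (W₁ᵀ * (P * X * Q)) := by
      rw [Matrix.mul_assoc, Matrix.trace_mul_comm]
      simp only [Matrix.mul_assoc]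
    have e2 : trace ((1 - Q) * (W₂ᵀ * (1 - P)) * X) = trace (W₂ᵀ * ((1 - P) * X * (1 - Q))) := by
      rw [Matrix.mul_assoc, Matrix.trace_mul_comm]
      simp only [Matrix.mul_assoc]
    rw [hWt, Matrix.add_mul, trace_add, e1, e2, h1, h2]
  rw [← htr]
  exact trace_le_nn hcontr X

lemma sandwich' {V : Mat n} (hVt : Vᵀ * V = 1) (a b : Fin n → ℝ) :
    (V * diagonal a * Vᵀ) * (V * diagonal b * Vᵀ)
      = V * diagonal (fun i => a i * b i) * Vᵀ := by
  have hVt' : ∀ Z : Mat n, Vᵀ * (V * Z) = Z := fun Z => by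
    rw [← Matrix.mul_assoc, hVt, Matrix.one_mul]
  simp only [Matrix.mul_assoc, hVt']
  simp only [← Matrix.mul_assoc]
  rw [Matrix.mul_assoc V (diagonal a) (diagonal b), diagonal_mul_diagonal]

lemma exists_proj (B : Mat n) :
    ∃ Q : Mat n, Qᵀ = Q ∧ Q * Q = Q ∧ Q.rank = B.rank ∧ B * Q = B := by
  set V := specV B with hVdef
  set lam := specL B with hlam
  have hVt : Vᵀ * V = 1 := specV_t_mul B
  have hVVt : V * Vᵀ = 1 := specV_mul_t B
  have hdec : Bᵀ * B = V * diagonal lam * Vᵀ := spec_decomp B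
  set e : Fin n → ℝ := fun i => if lam i = 0 then 0 else 1 with he
  refine ⟨V * diagonal e * Vᵀ, ?_, ?_, ?_, ?_⟩
  · rw [transpose_mul, transpose_mul, transpose_transpose, diagonal_transpose, Matrix.mul_assoc]
  · rw [sandwich' hVt]
    have hee : (fun i => e i * e i) = e := by
      funext i; by_cases h : lam i = 0 <;> simp [he, h]
    rw [hee]
  · have hdet : IsUnit V.det := isUnit_det_of_right_inverse hVVt
    have hdetT : IsUnit Vᵀ.det := by rwa [det_transpose]
    rw [rank_mul_eq_left_of_isUnit_det Vᵀ _ hdetT, rank_mul_eq_right_of_isUnit_det V _ hdet,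
      rank_diagonal]
    have hBr : B.rank = Fintype.card {i // lam i ≠ 0} := by
      rw [← rank_transpose_mul_self B,
        show Bᵀ = Bᴴ from (conjTranspose_eq_transpose_of_trivial B).symm]
      exact (isHermitian_conjTranspose_mul_self B).rank_eq_card_non_zero_eigs
    rw [hBr]
    apply Fintype.card_congr
    apply Equiv.subtypeEquivRight
    intro i
    by_cases h : lam i = 0 <;> simp [he, h]
  · have h1Q : (1 : Mat n) - V * diagonal e * Vᵀ = V * diagonal (fun i => 1 - e i) * Vᵀ := by
      rw [show diagonal (fun i => 1 - e i) = 1 - diagonal e from by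
        rw [← diagonal_one, diagonal_sub]]
      rw [Matrix.mul_sub, Matrix.mul_one, Matrix.sub_mul, hVVt]
    have h0 : (B * (1 - V * diagonal e * Vᵀ))ᵀ * (B * (1 - V * diagonal e * Vᵀ)) = 0 := by
      have key : (B * (1 - V * diagonal e * Vᵀ))ᵀ * (B * (1 - V * diagonal e * Vᵀ))
          = (1 - V * diagonal e * Vᵀ)ᵀ * (Bᵀ * B) * (1 - V * diagonal e * Vᵀ) := by
        simp only [transpose_mul, Matrix.mul_assoc]
      rw [key, h1Q, hdec]
      have hqt : (V * diagonal (fun i => 1 - e i) * Vᵀ)ᵀ = V * diagonal (fun i => 1 - e i) * Vᵀ := by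
        rw [transpose_mul, transpose_mul, transpose_transpose, diagonal_transpose,
          Matrix.mul_assoc]
      rw [hqt, sandwich' hVt, sandwich' hVt]
      have hz : (fun i => (fun j => (1 - e j) * lam j) i * (1 - e i)) = fun _ => (0:ℝ) := by
        funext i
        by_cases h : lam i = 0 <;> simp [he, h]
      rw [hz, diagonal_zero, Matrix.mul_zero, Matrix.zero_mul]
    have hz2 : B * (1 - V * diagonal e * Vᵀ) = 0 := by
      rw [show (B * (1 - V * diagonal e * Vᵀ))ᵀ
          = (B * (1 - V * diagonal e * Vᵀ))ᴴ from
        (conjTranspose_eq_transpose_of_trivial _).symm] at h0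
      exact conjTranspose_mul_self_eq_zero.mp h0
    rw [Matrix.mul_sub, Matrix.mul_one, sub_eq_zero] at hz2
    exact hz2.symm

end NN6

/-- If `‖(I−P) Y (I−Q)‖_* ≥ ‖P Y Q‖_*` holds for every pair of rank-`r`
orthogonal projections `P`, `Q` and every `Y` in the null space of `A`, then
every null-space decomposition `Y = Y₁ + Y₂` with `rank Y₁ = r` and
`rank Y₂ > r` satisfies `‖Y₁‖_* ≤ ‖Y₂‖_*`. -/
theorem stmt6 (n m r : ℕ) (hr : r ≤ n)
    (A : Matrix (Fin n) (Fin n) ℝ →ₗ[ℝ] (Fin m → ℝ))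
    (hcond : ∀ P Q : Matrix (Fin n) (Fin n) ℝ,
      Pᵀ = P → P * P = P → P.rank = r →
      Qᵀ = Q → Q * Q = Q → Q.rank = r →
      ∀ Y : Matrix (Fin n) (Fin n) ℝ, A Y = 0 →
        nuclearNorm (P * Y * Q) ≤ nuclearNorm ((1 - P) * Y * (1 - Q))) :
    ∀ Y Y₁ Y₂ : Matrix (Fin n) (Fin n) ℝ, A Y = 0 → Y = Y₁ + Y₂ →
      Y₁.rank = r → r < Y₂.rank → nuclearNorm Y₁ ≤ nuclearNorm Y₂ := by
  intro Y Y₁ Y₂ hY hsum hr1 _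
  obtain ⟨Q, hQt, hQi, hQr, hY1Q⟩ := NN6.exists_proj Y₁
  obtain ⟨P, hPt, hPi, hPr, hY1tP⟩ := NN6.exists_proj Y₁ᵀ
  have hPY1 : P * Y₁ = Y₁ := by
    have h := congrArg Matrix.transpose hY1tP
    rwa [transpose_mul, transpose_transpose, hPt] at h
  have hrQ : Q.rank = r := by rw [hQr, hr1]
  have hrP : P.rank = r := by rw [hPr, Matrix.rank_transpose, hr1]
  have key := hcond P Q hPt hPi hrP hQt hQi hrQ Y hY
  have hPYQ : P * Y * Q = Y₁ + P * Y₂ * Q := by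
    rw [hsum, Matrix.mul_add, Matrix.add_mul, Matrix.mul_assoc P Y₁ Q, ← Matrix.mul_assoc,
      hPY1, hY1Q]
  have hcomp : (1 - P) * Y * (1 - Q) = (1 - P) * Y₂ * (1 - Q) := by
    have hz : (1 - P) * Y₁ = 0 := by
      rw [Matrix.sub_mul, Matrix.one_mul, hPY1, sub_self]
    rw [hsum, Matrix.mul_add, Matrix.add_mul, hz, Matrix.zero_mul, zero_add]
  have t1 : nuclearNorm Y₁ ≤ nuclearNorm (P * Y * Q) + nuclearNorm (P * Y₂ * Q) := by
    have hd : Y₁ = (P * Y * Q) + (-(P * Y₂ * Q)) := by rw [hPYQ]; abel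
    calc nuclearNorm Y₁ = nuclearNorm ((P * Y * Q) + (-(P * Y₂ * Q))) := by rw [← hd]
      _ ≤ nuclearNorm (P * Y * Q) + nuclearNorm (-(P * Y₂ * Q)) := NN6.nn_add_le _ _
      _ = nuclearNorm (P * Y * Q) + nuclearNorm (P * Y₂ * Q) := by rw [NN6.nn_neg]
  have t2 : nuclearNorm (P * Y * Q) ≤ nuclearNorm ((1 - P) * Y₂ * (1 - Q)) := by
    rw [← hcomp]; exact key
  have t3 := NN6.pinch hPt hPi hQt hQi Y₂
  linarith
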